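/- In the category of symmetric reflexive graphs with bijective relation-preserving maps and the involution given by complement-with-diagonal on objects and inverse on maps, the only pre-unitary objects are the empty graph and the one-point graph. That is, if (X, ∼) carries an isomorphism h : X → X† with h ⋅ (h^{-1})† = ι (which here forces h ∘ h = id as a set map), then |X| ≤ 1. -/
import Mathlib

universe u

/-- In the category `SRGraph` of symmetric reflexive graphs with bijective
relation-preserving maps, with involution `(X,∼) ↦ (X,∼†)` where `x ∼† x' ↔ (x = x' ∨ ¬ x ∼ x')`
and `α ↦ α⁻¹` on maps, the only pre-unitary objects have at most one point.
Here `h : (X,∼) → (X,∼†)` is an isomorphism (so both `h` and its inverse preserve the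
respective relations), and the pre-unitary condition `h ≫ (h⁻¹)† = ι = id` amounts to
`h ∘ h = id` on the underlying set. -/
theorem srgraph_preunitary_subsingleton {X : Type u}
    (r : X → X → Prop) (hrefl : ∀ x, r x x) (hsymm : ∀ x y, r x y → r y x)
    (h : X ≃ X)
    (hpres : ∀ x y, r x y → (h x = h y ∨ ¬ r (h x) (h y)))
    (hinvpres : ∀ x y, (x = y ∨ ¬ r x y) → r (h.symm x) (h.symm y))
    (hh : ∀ x, h (h x) = x) :
    Subsingleton X := by
  have hsy : ∀ x, h.symm x = h x := by
    intro x
    conv_lhs => rw [← hh x, Equiv.symm_apply_apply]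
  have hfix : ∀ x, h x = x := by
    intro x
    by_contra hne
    have h1 : ¬ r x (h x) := by
      intro hr
      rcases hpres x (h x) hr with he | hnr
      · rw [hh] at he; exact hne he
      · rw [hh] at hnr; exact hnr (hsymm _ _ hr)
    have h2 := hinvpres x (h x) (Or.inr h1)
    rw [hsy, hsy, hh] at h2
    exact h1 (hsymm _ _ h2)
  constructor
  intro a b
  by_contra hne
  have h1 : ¬ r a b := by
    intro hr
    rcases hpres a b hr with he | hnr
    · rw [hfix, hfix] at he; exact hne he
    · rw [hfix, hfix] at hnr; exact hnr hr
  have h2 := hinvpres a b (Or.inr h1)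
  rw [hsy, hsy, hfix, hfix] at h2
  exact h1 h2
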